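/- The function $\sigma_1(T) = \sup_{f \in \mathcal{L}_2(T)} \int_0^T |f'(t)|\,dt$ is subadditive: $\sigma_1(T_1 + T_2) \le \sigma_1(T_1) + \sigma_1(T_2)$ for all $T_1, T_2 > 0$. Consequently $\sigma_1(T) \le T + 2$ for all $T > 0$. -/

import Mathlib

open Set MeasureTheory intervalIntegral

/-- Membership in Landau's class `𝓛₂(T)`. -/
def InL2 (T : ℝ) (f f' : ℝ → ℝ) : Prop :=
  (∀ t ∈ Icc 0 T, HasDerivWithinAt f (f' t) (Icc 0 T) t) ∧
  (∀ t ∈ Icc 0 T, |f t| ≤ 1) ∧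
  LipschitzOnWith 1 f' (Icc 0 T)

/-- `σ₁(T) = sup_{f ∈ 𝓛₂(T)} ∫₀ᵀ |f'(t)| dt`. -/
noncomputable def sigma1 (T : ℝ) : ℝ :=
  sSup {y : ℝ | ∃ f f' : ℝ → ℝ, InL2 T f f' ∧ y = ∫ t in (0:ℝ)..T, |f' t|}

lemma InL2.abs_int {T : ℝ} {f f' : ℝ → ℝ} (h : InL2 T f f') {a b : ℝ}
    (ha : 0 ≤ a) (hab : a ≤ b) (hbT : b ≤ T) :
    IntervalIntegrable (fun t => |f' t|) volume a b := by
  apply ContinuousOn.intervalIntegrable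
  rw [uIcc_of_le hab]
  exact (h.2.2.continuousOn.mono (Icc_subset_Icc ha hbT)).abs

/-- Key bound: on a subinterval of length at most 2, the integral of `|f'|` is at most 2. -/
lemma InL2.key2 {T : ℝ} {f f' : ℝ → ℝ} (h : InL2 T f f') {a b : ℝ}
    (ha : 0 ≤ a) (hab : a ≤ b) (hbT : b ≤ T) (hlen : b - a ≤ 2) :
    (∫ t in a..b, |f' t|) ≤ 2 := by
  obtain ⟨hderiv, hbound, hlip⟩ := h
  have hsub : Icc a b ⊆ Icc 0 T := Icc_subset_Icc ha hbT
  have hf'c : ContinuousOn f' (Icc 0 T) := hlip.continuousOn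
  have hf'cab : ContinuousOn f' (Icc a b) := hf'c.mono hsub
  by_cases hz : ∃ z ∈ Icc a b, f' z = 0
  · obtain ⟨z, hzm, hz0⟩ := hz
    have hbnd : ∀ t ∈ Icc a b, |f' t| ≤ |t - z| := by
      intro t ht
      have := hlip.dist_le_mul t (hsub ht) z (hsub hzm)
      rw [Real.dist_eq, Real.dist_eq, hz0, sub_zero] at this
      simpa using this
    have haz : a ≤ z := hzm.1
    have hzb : z ≤ b := hzm.2
    have int1 : IntervalIntegrable (fun t => |f' t|) volume a z :=
      InL2.abs_int ⟨hderiv, hbound, hlip⟩ ha haz (le_trans hzb hbT)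
    have int2 : IntervalIntegrable (fun t => |f' t|) volume z b :=
      InL2.abs_int ⟨hderiv, hbound, hlip⟩ (le_trans ha haz) hzb hbT
    have e1 : (∫ t in a..z, |f' t|) ≤ (z - a) ^ 2 / 2 := by
      have intlin1 : IntervalIntegrable (fun t => z - t) volume a z :=
        (Continuous.intervalIntegrable (by continuity) _ _)
      have mono : (∫ t in a..z, |f' t|) ≤ ∫ t in a..z, (z - t) := by
        apply intervalIntegral.integral_mono_on haz int1 intlin1
        intro t ht
        have h1 := hbnd t ⟨ht.1, le_trans ht.2 hzb⟩
        have he : |t - z| = z - t := by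
          rw [abs_sub_comm]; exact abs_of_nonneg (by linarith [ht.2])
        rwa [he] at h1
      have comp : (∫ t in a..z, (z - t)) = (z - a) ^ 2 / 2 := by
        rw [intervalIntegral.integral_sub (intervalIntegrable_const)
          (Continuous.intervalIntegrable (by continuity) _ _)]
        simp [integral_id, intervalIntegral.integral_const]
        ring
      linarith [mono, comp.le, comp.ge]
    have e2 : (∫ t in z..b, |f' t|) ≤ (b - z) ^ 2 / 2 := by
      have intlin2 : IntervalIntegrable (fun t => t - z) volume z b :=
        (Continuous.intervalIntegrable (by continuity) _ _)
      have mono : (∫ t in z..b, |f' t|) ≤ ∫ t in z..b, (t - z) := by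
        apply intervalIntegral.integral_mono_on hzb int2 intlin2
        intro t ht
        have h1 := hbnd t ⟨le_trans haz ht.1, ht.2⟩
        have he : |t - z| = t - z := abs_of_nonneg (by linarith [ht.1])
        rwa [he] at h1
      have comp : (∫ t in z..b, (t - z)) = (b - z) ^ 2 / 2 := by
        rw [intervalIntegral.integral_sub (Continuous.intervalIntegrable (by continuity) _ _)
          (intervalIntegrable_const)]
        simp [integral_id, intervalIntegral.integral_const]
        ring
      linarith [mono, comp.le]
    have split : (∫ t in a..b, |f' t|) = (∫ t in a..z, |f' t|) + ∫ t in z..b, |f' t| :=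
      (intervalIntegral.integral_add_adjacent_intervals int1 int2).symm
    have : (z - a) ^ 2 / 2 + (b - z) ^ 2 / 2 ≤ 2 := by nlinarith
    linarith
  · push_neg at hz
    -- f' has constant sign on [a,b]
    have hcontT : ContinuousOn f (Icc 0 T) := fun t ht => (hderiv t ht).continuousWithinAt
    have hcont : ContinuousOn f (Icc a b) := hcontT.mono hsub
    have hderiv' : ∀ x ∈ Ioo a b, HasDerivWithinAt f (f' x) (Ioi x) x := by
      intro x hx
      have hx' : x ∈ Icc 0 T := ⟨le_trans ha hx.1.le, le_trans hx.2.le hbT⟩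
      have : HasDerivAt f (f' x) x := by
        apply (hderiv x hx').hasDerivAt
        exact Icc_mem_nhds (lt_of_le_of_lt ha hx.1) (lt_of_lt_of_le hx.2 hbT)
      exact this.hasDerivWithinAt
    have hint : IntervalIntegrable f' volume a b := by
      apply ContinuousOn.intervalIntegrable
      rwa [uIcc_of_le hab]
    have hftc : (∫ t in a..b, f' t) = f b - f a :=
      intervalIntegral.integral_eq_sub_of_hasDeriv_right_of_le hab hcont hderiv' hint
    have hsign : (∀ t ∈ Icc a b, 0 < f' t) ∨ (∀ t ∈ Icc a b, f' t < 0) := by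
      rcases lt_or_gt_of_ne (hz a (left_mem_Icc.mpr hab)) with hneg | hpos
      · right
        intro t ht
        by_contra hle
        push_neg at hle
        have hsub2 : uIcc a t ⊆ Icc a b := by
          rw [uIcc_of_le ht.1]; exact Icc_subset_Icc le_rfl ht.2
        have := intermediate_value_uIcc (hf'cab.mono hsub2)
        have h0 : (0:ℝ) ∈ uIcc (f' a) (f' t) := by
          rw [Set.mem_uIcc]; left; exact ⟨hneg.le, hle⟩
        obtain ⟨z, hzm, hz0⟩ := this h0
        exact hz z (hsub2 hzm) hz0
      · left
        intro t ht
        by_contra hle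
        push_neg at hle
        have hsub2 : uIcc a t ⊆ Icc a b := by
          rw [uIcc_of_le ht.1]; exact Icc_subset_Icc le_rfl ht.2
        have := intermediate_value_uIcc (hf'cab.mono hsub2)
        have h0 : (0:ℝ) ∈ uIcc (f' a) (f' t) := by
          rw [Set.mem_uIcc]; right; exact ⟨hle, hpos.le⟩
        obtain ⟨z, hzm, hz0⟩ := this h0
        exact hz z (hsub2 hzm) hz0
    have hfa := hbound a (hsub (left_mem_Icc.mpr hab))
    have hfb := hbound b (hsub (right_mem_Icc.mpr hab))
    rcases hsign with hpos | hneg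
    · have : (∫ t in a..b, |f' t|) = ∫ t in a..b, f' t := by
        apply intervalIntegral.integral_congr
        intro t ht
        rw [uIcc_of_le hab] at ht
        exact abs_of_pos (hpos t ht)
      rw [this, hftc]
      obtain ⟨hfa1, hfa2⟩ := abs_le.mp hfa
      obtain ⟨hfb1, hfb2⟩ := abs_le.mp hfb
      linarith
    · have : (∫ t in a..b, |f' t|) = ∫ t in a..b, -f' t := by
        apply intervalIntegral.integral_congr
        intro t ht
        rw [uIcc_of_le hab] at ht
        exact abs_of_neg (hneg t ht)
      rw [this, intervalIntegral.integral_neg, hftc]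
      obtain ⟨hfa1, hfa2⟩ := abs_le.mp hfa
      obtain ⟨hfb1, hfb2⟩ := abs_le.mp hfb
      linarith

lemma InL2.keyN {T : ℝ} {f f' : ℝ → ℝ} (h : InL2 T f f') :
    ∀ (n : ℕ) (a b : ℝ), 0 ≤ a → a ≤ b → b ≤ T → b - a ≤ 2 * n + 2 →
      (∫ t in a..b, |f' t|) ≤ (b - a) + 2 := by
  intro n
  induction n with
  | zero =>
    intro a b ha hab hbT hlen
    have := h.key2 ha hab hbT (by push_cast at hlen; linarith)
    linarith
  | succ n ih =>
    intro a b ha hab hbT hlen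
    by_cases hsmall : b - a ≤ 2 * n + 2
    · exact ih a b ha hab hbT hsmall
    · push_neg at hsmall
      have hc : a ≤ b - 2 := by nlinarith [n.cast_nonneg (α := ℝ)]
      have int1 : IntervalIntegrable (fun t => |f' t|) volume a (b - 2) :=
        h.abs_int ha hc (by linarith)
      have int2 : IntervalIntegrable (fun t => |f' t|) volume (b - 2) b :=
        h.abs_int (by linarith) (by linarith) hbT
      have split : (∫ t in a..b, |f' t|) =
          (∫ t in a..(b-2), |f' t|) + ∫ t in (b-2)..b, |f' t| :=
        (intervalIntegral.integral_add_adjacent_intervals int1 int2).symm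
      have h1 := ih a (b - 2) ha hc (by linarith) (by push_cast at hlen ⊢; linarith)
      have h2 := h.key2 (a := b - 2) (b := b) (by linarith) (by linarith) hbT (by linarith)
      rw [split]; linarith

lemma InL2.zero (T : ℝ) : InL2 T (fun _ => 0) (fun _ => 0) := by
  refine ⟨fun t _ => hasDerivWithinAt_const t _ 0, fun t _ => by norm_num, ?_⟩
  intro x _ y _
  simp

lemma sigma1_mem_le {T : ℝ} (hT : 0 < T) :
    ∀ y ∈ {y : ℝ | ∃ f f' : ℝ → ℝ, InL2 T f f' ∧ y = ∫ t in (0:ℝ)..T, |f' t|},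
      y ≤ T + 2 := by
  rintro y ⟨f, f', hf, rfl⟩
  obtain ⟨n, hn⟩ := exists_nat_ge T
  have := hf.keyN n 0 T le_rfl hT.le le_rfl (by linarith [n.cast_nonneg (α := ℝ)])
  simpa using this

lemma sigma1_set_nonempty (T : ℝ) :
    {y : ℝ | ∃ f f' : ℝ → ℝ, InL2 T f f' ∧ y = ∫ t in (0:ℝ)..T, |f' t|}.Nonempty := by
  refine ⟨0, fun _ => 0, fun _ => 0, InL2.zero T, by simp⟩

lemma sigma1_le (T : ℝ) (hT : 0 < T) : sigma1 T ≤ T + 2 :=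
  csSup_le (sigma1_set_nonempty T) (sigma1_mem_le hT)

/-- `σ₁` is subadditive, and consequently `σ₁(T) ≤ T + 2` for all `T > 0`. -/
theorem sigma1_subadditive :
    (∀ T₁ T₂ : ℝ, 0 < T₁ → 0 < T₂ → sigma1 (T₁ + T₂) ≤ sigma1 T₁ + sigma1 T₂) ∧
    (∀ T : ℝ, 0 < T → sigma1 T ≤ T + 2) := by
  constructor
  · intro T₁ T₂ h1 h2
    have bdd1 : BddAbove {y : ℝ | ∃ f f' : ℝ → ℝ, InL2 T₁ f f' ∧ y = ∫ t in (0:ℝ)..T₁, |f' t|} :=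
      ⟨T₁ + 2, sigma1_mem_le h1⟩
    have bdd2 : BddAbove {y : ℝ | ∃ f f' : ℝ → ℝ, InL2 T₂ f f' ∧ y = ∫ t in (0:ℝ)..T₂, |f' t|} :=
      ⟨T₂ + 2, sigma1_mem_le h2⟩
    apply csSup_le (sigma1_set_nonempty _)
    rintro y ⟨f, f', hf, rfl⟩
    obtain ⟨hderiv, hbound, hlip⟩ := hf
    -- restriction to [0, T₁]
    have mem1 : (∫ t in (0:ℝ)..T₁, |f' t|) ∈
        {y : ℝ | ∃ f f' : ℝ → ℝ, InL2 T₁ f f' ∧ y = ∫ t in (0:ℝ)..T₁, |f' t|} := by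
      refine ⟨f, f', ⟨?_, ?_, ?_⟩, rfl⟩
      · intro t ht
        exact (hderiv t (Icc_subset_Icc le_rfl (by linarith) ht)).mono
          (Icc_subset_Icc le_rfl (by linarith))
      · exact fun t ht => hbound t (Icc_subset_Icc le_rfl (by linarith) ht)
      · exact hlip.mono (Icc_subset_Icc le_rfl (by linarith))
    -- shifted function on [0, T₂]
    have mem2 : (∫ t in T₁..(T₁+T₂), |f' t|) ∈
        {y : ℝ | ∃ f f' : ℝ → ℝ, InL2 T₂ f f' ∧ y = ∫ t in (0:ℝ)..T₂, |f' t|} := by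
      refine ⟨fun s => f (s + T₁), fun s => f' (s + T₁), ⟨?_, ?_, ?_⟩, ?_⟩
      · intro t ht
        have hmem : t + T₁ ∈ Icc (0:ℝ) (T₁ + T₂) := ⟨by linarith [ht.1], by linarith [ht.2]⟩
        have hd1 : HasDerivWithinAt f (f' (t + T₁)) (Icc 0 (T₁+T₂)) (t + T₁) := hderiv _ hmem
        have hd2 : HasDerivWithinAt (fun s => s + T₁) 1 (Icc 0 T₂) t :=
          ((hasDerivAt_id t).add_const T₁).hasDerivWithinAt
        have hmaps : MapsTo (fun s => s + T₁) (Icc 0 T₂) (Icc 0 (T₁+T₂)) := by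
          intro s hs
          simp only [mem_Icc] at hs ⊢
          constructor <;> linarith
        simpa [Function.comp_def] using hd1.comp t hd2 hmaps
      · intro t ht
        exact hbound _ ⟨by linarith [ht.1], by linarith [ht.2]⟩
      · intro x hx y hy
        have := hlip (x := x + T₁) (y := y + T₁)
          ⟨by linarith [hx.1], by linarith [hx.2]⟩ ⟨by linarith [hy.1], by linarith [hy.2]⟩
        simpa [edist_add_right] using this
      · rw [intervalIntegral.integral_comp_add_right (fun t => |f' t|) T₁]
        norm_num [add_comm]
    have int1 : IntervalIntegrable (fun t => |f' t|) volume 0 T₁ :=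
      InL2.abs_int ⟨hderiv, hbound, hlip⟩ le_rfl (by linarith) (by linarith)
    have int2 : IntervalIntegrable (fun t => |f' t|) volume T₁ (T₁ + T₂) :=
      InL2.abs_int ⟨hderiv, hbound, hlip⟩ (by linarith) (by linarith) le_rfl
    have split : (∫ t in (0:ℝ)..(T₁+T₂), |f' t|) =
        (∫ t in (0:ℝ)..T₁, |f' t|) + ∫ t in T₁..(T₁+T₂), |f' t| :=
      (intervalIntegral.integral_add_adjacent_intervals int1 int2).symm
    rw [split]
    exact add_le_add (le_csSup bdd1 mem1) (le_csSup bdd2 mem2)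
  · exact sigma1_le
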